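/- Let f : Ω → 𝕆 be a slice regular function on a symmetric slice domain Ω ⊆ 𝕆. If |f| attains a local minimum at a real point w₀ ∈ Ω ∩ ℝ, then either f(w₀) = 0 or f is constant. -/

import Mathlib

noncomputable section

open Quaternion

/-- The octonions, realized via the Cayley–Dickson construction over the quaternions. -/
abbrev Octo := ℍ[ℝ] × ℍ[ℝ]

namespace Octo

/-- Octonion multiplication (Cayley–Dickson): (z₁,z₂)(w₁,w₂) = (z₁w₁ - w̄₂z₂, z₂w̄₁ + w₂z₁). -/
def mul' (z w : Octo) : Octo :=
  (z.1 * w.1 - star w.2 * z.2, z.2 * star w.1 + w.2 * z.1)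

/-- Octonionic conjugation. -/
def conj' (x : Octo) : Octo := (star x.1, -x.2)

/-- The multiplicative unit of the octonions. -/
def one' : Octo := (1, 0)

/-- The embedding of the reals into the octonions. -/
def emb (x : ℝ) : Octo := (algebraMap ℝ ℍ[ℝ] x, 0)

/-- The real part of an octonion. -/
def re' (x : Octo) : ℝ := x.1.re

/-- The imaginary part of an octonion. -/
def im' (x : Octo) : Octo := x - emb (re' x)

/-- The standard Euclidean inner product on 𝕆 ≅ ℝ⁸. -/
def inner' (x y : Octo) : ℝ := (inner ℝ x.1 y.1 : ℝ) + (inner ℝ x.2 y.2 : ℝ)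

/-- The Euclidean norm on the octonions. -/
def norm' (x : Octo) : ℝ := Real.sqrt (inner' x x)

/-- The multiplicative inverse of a nonzero octonion. -/
def inv' (x : Octo) : Octo := (inner' x x)⁻¹ • conj' x

/-- The associator [u,v,w] = (uv)w - u(vw). -/
def assoc' (u v w : Octo) : Octo := mul' (mul' u v) w - mul' u (mul' v w)

/-- n-th power of an octonion. -/
def pow' (x : Octo) : ℕ → Octo
  | 0 => one'
  | n + 1 => mul' x (pow' x n)

/-- A purely imaginary unit octonion: I ∈ 𝕊 iff I² = -1. -/
def IsImUnit (I : Octo) : Prop := mul' I I = - one'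

/-- The point x + yI on the slice ℂ_I. -/
def pt (I : Octo) (p : ℝ × ℝ) : Octo := emb p.1 + p.2 • I

/-- The slice ℂ_I = ℝ ⊕ Iℝ. -/
def sliceSet (I : Octo) : Set Octo := {z | ∃ p : ℝ × ℝ, z = pt I p}

/-- e^{θI} = cos θ + (sin θ) I. -/
def expI (θ : ℝ) (I : Octo) : Octo := emb (Real.cos θ) + Real.sin θ • I

/-- Slice regularity: on every slice ℂ_I the function is holomorphic, i.e. real
differentiable with ∂f/∂x + I ∂f/∂y = 0. -/
def SliceRegular (Ω : Set Octo) (f : Octo → Octo) : Prop :=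
  ∀ I, IsImUnit I → ∀ p : ℝ × ℝ, pt I p ∈ Ω →
    ∃ fx fy : Octo,
      HasFDerivAt (fun q : ℝ × ℝ => f (pt I q))
        ((ContinuousLinearMap.fst ℝ ℝ ℝ).smulRight fx
          + (ContinuousLinearMap.snd ℝ ℝ ℝ).smulRight fy) p
      ∧ fx + mul' I fy = 0

/-- Symmetric slice domain: open, connected, meeting the real axis, with each slice a
domain, and axially symmetric. -/
def SymSliceDomain (Ω : Set Octo) : Prop :=
  IsOpen Ω ∧ IsConnected Ω ∧ (∃ x : ℝ, emb x ∈ Ω) ∧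
  (∀ I, IsImUnit I → IsConnected {p : ℝ × ℝ | pt I p ∈ Ω}) ∧
  (∀ I J, IsImUnit I → IsImUnit J → ∀ p : ℝ × ℝ, pt I p ∈ Ω → pt J p ∈ Ω)

/-- The open unit ball 𝔹 of the octonions. -/
def ball1 : Set Octo := {z | norm' z < 1}

end Octo

open Topology Filter
open scoped ENNReal NNReal

namespace Octo

theorem inner'_def (x y : Octo) :
    inner' x y = (x.1 * star y.1).re + (x.2 * star y.2).re := rfl

theorem inner'_symm (x y : Octo) : inner' x y = inner' y x := by
  obtain ⟨a, b⟩ := x; obtain ⟨c, d⟩ := y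
  simp only [inner'_def, Quaternion.re_mul, Quaternion.re_star, Quaternion.imI_star,
    Quaternion.imJ_star, Quaternion.imK_star]
  ring

theorem inner'_add_left (x y z : Octo) : inner' (x + y) z = inner' x z + inner' y z := by
  simp only [inner'_def, Prod.fst_add, Prod.snd_add, add_mul, Quaternion.re_add]; ring

theorem inner'_add_right (x y z : Octo) : inner' x (y + z) = inner' x y + inner' x z := by
  rw [inner'_symm, inner'_add_left, inner'_symm y x, inner'_symm z x]

theorem inner'_smul_left (a : ℝ) (x y : Octo) : inner' (a • x) y = a * inner' x y := by
  simp only [inner'_def, Prod.smul_fst, Prod.smul_snd, smul_mul_assoc, Quaternion.re_smul,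
    smul_eq_mul]
  ring

theorem inner'_smul_right (a : ℝ) (x y : Octo) : inner' x (a • y) = a * inner' x y := by
  rw [inner'_symm, inner'_smul_left, inner'_symm]

theorem inner'_neg_right (x y : Octo) : inner' x (-y) = - inner' x y := by
  have : (-y) = (-1 : ℝ) • y := by simp
  rw [this, inner'_smul_right]; ring

theorem inner'_self_nonneg (x : Octo) : 0 ≤ inner' x x := by
  have h1 : (inner ℝ x.1 x.1 : ℝ) ≥ 0 := real_inner_self_nonneg
  have h2 : (inner ℝ x.2 x.2 : ℝ) ≥ 0 := real_inner_self_nonneg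
  simp only [inner']; linarith

theorem inner'_self_eq_zero {x : Octo} (h : inner' x x = 0) : x = 0 := by
  have h1 : (inner ℝ x.1 x.1 : ℝ) ≥ 0 := real_inner_self_nonneg
  have h2 : (inner ℝ x.2 x.2 : ℝ) ≥ 0 := real_inner_self_nonneg
  have e1 : (inner ℝ x.1 x.1 : ℝ) = 0 := by simp only [inner'] at h; linarith
  have e2 : (inner ℝ x.2 x.2 : ℝ) = 0 := by simp only [inner'] at h; linarith
  have : x.1 = 0 := by rwa [inner_self_eq_zero] at e1
  have : x.2 = 0 := by rwa [inner_self_eq_zero] at e2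
  exact Prod.ext ‹x.1 = 0› this

theorem norm'_sq (x : Octo) : norm' x ^ 2 = inner' x x :=
  Real.sq_sqrt (inner'_self_nonneg x)

theorem norm'_nonneg (x : Octo) : 0 ≤ norm' x := Real.sqrt_nonneg _

theorem inner'_le_of_norm'_le {x y : Octo} (h : norm' x ≤ norm' y) : inner' x x ≤ inner' y y := by
  rw [← norm'_sq, ← norm'_sq]
  exact pow_le_pow_left₀ (norm'_nonneg x) h 2

theorem norm'_pos {x : Octo} (hx : x ≠ 0) : 0 < norm' x := by
  rcases lt_or_eq_of_le (inner'_self_nonneg x) with h | h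
  · exact Real.sqrt_pos.2 h
  · exact absurd (inner'_self_eq_zero h.symm) hx

theorem abs_inner'_le (x y : Octo) : |inner' x y| ≤ 2 * ‖x‖ * ‖y‖ := by
  have h1 : |(inner ℝ x.1 y.1 : ℝ)| ≤ ‖x.1‖ * ‖y.1‖ := abs_real_inner_le_norm _ _
  have h2 : |(inner ℝ x.2 y.2 : ℝ)| ≤ ‖x.2‖ * ‖y.2‖ := abs_real_inner_le_norm _ _
  have hx1 : ‖x.1‖ ≤ ‖x‖ := norm_fst_le x
  have hx2 : ‖x.2‖ ≤ ‖x‖ := norm_snd_le x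
  have hy1 : ‖y.1‖ ≤ ‖y‖ := norm_fst_le y
  have hy2 : ‖y.2‖ ≤ ‖y‖ := norm_snd_le y
  have := abs_add_le (inner ℝ x.1 y.1 : ℝ) (inner ℝ x.2 y.2 : ℝ)
  have hb1 : ‖x.1‖ * ‖y.1‖ ≤ ‖x‖ * ‖y‖ :=
    mul_le_mul hx1 hy1 (norm_nonneg _) (norm_nonneg _)
  have hb2 : ‖x.2‖ * ‖y.2‖ ≤ ‖x‖ * ‖y‖ :=
    mul_le_mul hx2 hy2 (norm_nonneg _) (norm_nonneg _)
  simp only [inner']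
  calc |(inner ℝ x.1 y.1 : ℝ) + (inner ℝ x.2 y.2 : ℝ)| ≤ _ + _ := abs_add_le _ _
    _ ≤ ‖x‖ * ‖y‖ + ‖x‖ * ‖y‖ := add_le_add (le_trans h1 hb1) (le_trans h2 hb2)
    _ = 2 * ‖x‖ * ‖y‖ := by ring

theorem mul'_add_left (x y z : Octo) : mul' (x + y) z = mul' x z + mul' y z := by
  simp only [mul', Prod.fst_add, Prod.snd_add, add_mul, Prod.mk_add_mk, mul_add,
    Prod.mk.injEq]
  constructor <;> abel

theorem mul'_add_right (x y z : Octo) : mul' x (y + z) = mul' x y + mul' x z := by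
  simp only [mul', Prod.fst_add, Prod.snd_add, star_add, add_mul, mul_add, Prod.mk_add_mk,
    Prod.mk.injEq]
  constructor <;> abel

theorem mul'_smul_left (a : ℝ) (x z : Octo) : mul' (a • x) z = a • mul' x z := by
  simp only [mul', Prod.smul_fst, Prod.smul_snd, Prod.smul_mk, smul_mul_assoc, mul_smul_comm,
    smul_sub, smul_add]

theorem mul'_smul_right (a : ℝ) (x z : Octo) : mul' x (a • z) = a • mul' x z := by
  simp only [mul', Prod.smul_fst, Prod.smul_snd, Prod.smul_mk, Quaternion.star_smul, smul_mul_assoc,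
    mul_smul_comm, smul_sub, smul_add]

theorem mul'_zero_right (x : Octo) : mul' x 0 = 0 := by
  simp [mul']

theorem mul'_zero_left (x : Octo) : mul' 0 x = 0 := by
  simp [mul']

theorem mul'_neg_left (x z : Octo) : mul' (-x) z = - mul' x z := by
  have : (-x) = (-1 : ℝ) • x := by simp
  rw [this, mul'_smul_left]; simp

theorem one'_mul' (x : Octo) : mul' one' x = x := by
  simp [mul', one']

theorem mul'_one' (x : Octo) : mul' x one' = x := by
  simp [mul', one']

theorem emb_mul' (a : ℝ) (x : Octo) : mul' (emb a) x = a • x := by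
  obtain ⟨c, d⟩ := x
  simp only [mul', emb, Prod.smul_mk, Prod.mk.injEq]
  constructor
  · simp [Algebra.smul_def]
  · simp only [Algebra.smul_def, zero_mul, zero_add]
    exact (Quaternion.coe_commutes a d).symm

theorem left_alt (x y : Octo) : mul' x (mul' x y) = mul' (mul' x x) y := by
  obtain ⟨a, b⟩ := x; obtain ⟨c, d⟩ := y
  simp only [mul', Prod.mk.injEq]
  constructor <;>
  · ext <;>
      simp only [Quaternion.re_mul, Quaternion.imI_mul, Quaternion.imJ_mul, Quaternion.imK_mul,
        Quaternion.re_add, Quaternion.imI_add, Quaternion.imJ_add, Quaternion.imK_add,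
        Quaternion.re_sub, Quaternion.imI_sub, Quaternion.imJ_sub, Quaternion.imK_sub,
        Quaternion.re_star, Quaternion.imI_star, Quaternion.imJ_star, Quaternion.imK_star] <;>
      ring

theorem key_identity (x y : Octo) : mul' (mul' x (conj' y)) y = inner' y y • x := by
  obtain ⟨a, b⟩ := x; obtain ⟨c, d⟩ := y
  have h : inner' (c, d) (c, d) = (c * star c).re + (d * star d).re := rfl
  rw [h]
  simp only [mul', conj', Prod.smul_mk, Prod.mk.injEq]
  constructor <;>
  · ext <;>
      simp only [Prod.smul_fst, Prod.smul_snd, Quaternion.re_smul, Quaternion.imI_smul,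
        Quaternion.imJ_smul, Quaternion.imK_smul, smul_eq_mul,
        Quaternion.re_mul, Quaternion.imI_mul, Quaternion.imJ_mul, Quaternion.imK_mul,
        Quaternion.re_add, Quaternion.imI_add, Quaternion.imJ_add, Quaternion.imK_add,
        Quaternion.re_sub, Quaternion.imI_sub, Quaternion.imJ_sub, Quaternion.imK_sub,
        Quaternion.re_neg, Quaternion.imI_neg, Quaternion.imJ_neg, Quaternion.imK_neg,
        Quaternion.re_star, Quaternion.imI_star, Quaternion.imJ_star, Quaternion.imK_star] <;>
      ring

theorem imsq {x : Octo} (h : re' x = 0) : mul' x x = (- inner' x x) • one' := by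
  obtain ⟨a, b⟩ := x
  have h' : a.re = 0 := h
  have hi : inner' (a, b) (a, b) = (a * star a).re + (b * star b).re := rfl
  rw [hi]
  simp only [mul', one', Prod.smul_mk, Prod.mk.injEq]
  constructor <;>
  · ext <;>
      simp only [Prod.smul_fst, Prod.smul_snd, Quaternion.re_smul, Quaternion.imI_smul,
        Quaternion.imJ_smul, Quaternion.imK_smul, smul_eq_mul,
        Quaternion.re_mul, Quaternion.imI_mul, Quaternion.imJ_mul, Quaternion.imK_mul,
        Quaternion.re_add, Quaternion.imI_add, Quaternion.imJ_add, Quaternion.imK_add,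
        Quaternion.re_sub, Quaternion.imI_sub, Quaternion.imJ_sub, Quaternion.imK_sub,
        Quaternion.re_one, Quaternion.imI_one, Quaternion.imJ_one, Quaternion.imK_one,
        Quaternion.re_zero, Quaternion.imI_zero, Quaternion.imJ_zero, Quaternion.imK_zero,
        Quaternion.re_star, Quaternion.imI_star, Quaternion.imJ_star, Quaternion.imK_star, h'] <;>
      ring

theorem norm_mul'_le (x y : Octo) : ‖mul' x y‖ ≤ 2 * ‖x‖ * ‖y‖ := by
  have h1 : ‖x.1 * y.1 - star y.2 * x.2‖ ≤ 2 * ‖x‖ * ‖y‖ := by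
    calc ‖x.1 * y.1 - star y.2 * x.2‖ ≤ ‖x.1 * y.1‖ + ‖star y.2 * x.2‖ := norm_sub_le _ _
      _ = ‖x.1‖ * ‖y.1‖ + ‖y.2‖ * ‖x.2‖ := by rw [norm_mul, norm_mul, norm_star]
      _ ≤ ‖x‖ * ‖y‖ + ‖y‖ * ‖x‖ := by
          gcongr <;> first | exact norm_fst_le _ | exact norm_snd_le _
      _ = 2 * ‖x‖ * ‖y‖ := by ring
  have h2 : ‖x.2 * star y.1 + y.2 * x.1‖ ≤ 2 * ‖x‖ * ‖y‖ := by
    calc ‖x.2 * star y.1 + y.2 * x.1‖ ≤ ‖x.2 * star y.1‖ + ‖y.2 * x.1‖ := norm_add_le _ _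
      _ = ‖x.2‖ * ‖y.1‖ + ‖y.2‖ * ‖x.1‖ := by rw [norm_mul, norm_mul, norm_star]
      _ ≤ ‖x‖ * ‖y‖ + ‖y‖ * ‖x‖ := by
          gcongr <;> first | exact norm_fst_le _ | exact norm_snd_le _
      _ = 2 * ‖x‖ * ‖y‖ := by ring
  calc ‖mul' x y‖ = max ‖x.1 * y.1 - star y.2 * x.2‖ ‖x.2 * star y.1 + y.2 * x.1‖ := rfl
    _ ≤ 2 * ‖x‖ * ‖y‖ := max_le h1 h2

theorem inner'_self_pos {x : Octo} (hx : x ≠ 0) : 0 < inner' x x := by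
  rw [← norm'_sq]; exact pow_pos (norm'_pos hx) 2
  
theorem emb_zero : emb 0 = 0 := by simp [emb]
theorem emb_one : emb 1 = one' := by simp [emb, one']
theorem emb_add (a b : ℝ) : emb (a + b) = emb a + emb b := by
  simp [emb, Prod.mk_add_mk, map_add]
theorem emb_neg (a : ℝ) : emb (-a) = - emb a := by
  simp [emb, Prod.neg_mk]
theorem emb_re' (a : ℝ) : re' (emb a) = a := by
  simp [emb, re']
theorem norm_emb (a : ℝ) : ‖emb a‖ = |a| := by
  have : ‖emb a‖ = max ‖(algebraMap ℝ ℍ[ℝ] a)‖ ‖(0:ℍ[ℝ])‖ := rfl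
  rw [this]
  simp [Quaternion.norm_coe]

theorem re'_add (x y : Octo) : re' (x + y) = re' x + re' y := rfl
theorem re'_sub (x y : Octo) : re' (x - y) = re' x - re' y := rfl
theorem re'_im' (x : Octo) : re' (im' x) = 0 := by
  rw [im', re'_sub, emb_re', sub_self]
theorem emb_re'_add_im' (x : Octo) : emb (re' x) + im' x = x := by
  rw [im']; abel

theorem expI_zero (I : Octo) : expI 0 I = one' := by
  simp [expI, emb_one]
theorem expI_pi_div_two (I : Octo) : expI (Real.pi / 2) I = I := by
  simp [expI, emb_zero]
theorem expI_add_pi (α : ℝ) (I : Octo) : expI (α + Real.pi) I = - expI α I := by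
  simp only [expI, Real.cos_add, Real.sin_add, Real.cos_pi, Real.sin_pi]
  rw [show Real.cos α * -1 - Real.sin α * 0 = -Real.cos α by ring,
    show Real.sin α * -1 + Real.cos α * 0 = -Real.sin α by ring, emb_neg, neg_smul, neg_add]
theorem mul'_expI (α : ℝ) (I v : Octo) :
    mul' (expI α I) v = Real.cos α • v + Real.sin α • mul' I v := by
  rw [expI, mul'_add_left, emb_mul', mul'_smul_left]
theorem norm_expI_le (α : ℝ) (I : Octo) : ‖expI α I‖ ≤ 1 + ‖I‖ := by
  calc ‖expI α I‖ ≤ ‖emb (Real.cos α)‖ + ‖Real.sin α • I‖ := norm_add_le _ _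
    _ = |Real.cos α| + |Real.sin α| * ‖I‖ := by rw [norm_emb, norm_smul, Real.norm_eq_abs]
    _ ≤ 1 + 1 * ‖I‖ := by
        gcongr
        · exact Real.abs_cos_le_one α
        · exact Real.abs_sin_le_one α
    _ = 1 + ‖I‖ := by ring

theorem IsImUnit.mul'_mul' {I : Octo} (hI : IsImUnit I) (v : Octo) :
    mul' I (mul' I v) = -v := by
  rw [left_alt, hI, mul'_neg_left, one'_mul']

theorem isImUnit_i0 : IsImUnit ((⟨0, 1, 0, 0⟩ : ℍ[ℝ]), (0 : ℍ[ℝ])) := by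
  have key : ∀ q : ℍ[ℝ], q.re = 0 → q.imI = 1 → q.imJ = 0 → q.imK = 0 → IsImUnit (q, 0) := by
    intro q h0 h1 h2 h3
    simp only [IsImUnit, mul', one', star_zero, zero_mul, mul_zero, sub_zero, add_zero,
      Prod.neg_mk, neg_zero]
    refine Prod.ext ?_ (by simp)
    ext <;> simp [Quaternion.re_mul, Quaternion.imI_mul, Quaternion.imJ_mul, Quaternion.imK_mul, h0, h1, h2, h3]
  exact key _ rfl rfl rfl rfl

theorem isImUnit_normalize {v : Octo} (hre : re' v = 0) (hv : v ≠ 0) :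
    IsImUnit ((norm' v)⁻¹ • v) := by
  have hn : norm' v ≠ 0 := ne_of_gt (norm'_pos hv)
  rw [IsImUnit, mul'_smul_left, mul'_smul_right, imsq hre, smul_smul, smul_smul]
  rw [← norm'_sq]
  rw [show ((norm' v)⁻¹ * (norm' v)⁻¹ * -(norm' v ^ 2)) =
    -((norm' v)⁻¹ * norm' v * ((norm' v)⁻¹ * norm' v)) by ring, inv_mul_cancel₀ hn]
  simp

theorem eq_zero_of_inner'_units {c₀ ck : Octo} (hc₀ : c₀ ≠ 0)
    (h : ∀ I, IsImUnit I → ∀ α : ℝ, 0 ≤ inner' c₀ (mul' (expI α I) ck)) : ck = 0 := by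
  have h0 : ∀ I, IsImUnit I → ∀ α : ℝ, inner' c₀ (mul' (expI α I) ck) = 0 := by
    intro I hI α
    have h1 := h I hI α
    have h2 := h I hI (α + Real.pi)
    rw [expI_add_pi, mul'_neg_left, inner'_neg_right] at h2
    linarith
  have hck : ∀ I, IsImUnit I → inner' c₀ (mul' I ck) = 0 := by
    intro I hI
    have := h0 I hI (Real.pi / 2); rwa [expI_pi_div_two] at this
  have hone : inner' c₀ ck = 0 := by
    have := h0 _ isImUnit_i0 0
    rwa [expI_zero, one'_mul'] at this
  have hall : ∀ w : Octo, inner' c₀ (mul' w ck) = 0 := by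
    intro w
    have hw := emb_re'_add_im' w
    rw [← hw, mul'_add_left, inner'_add_right, emb_mul', inner'_smul_right, hone, mul_zero]
    rw [zero_add]
    by_cases him : im' w = 0
    · rw [him, mul'_zero_left]
      simp [inner'_def]
    · have hn : norm' (im' w) ≠ 0 := ne_of_gt (norm'_pos him)
      have : im' w = norm' (im' w) • ((norm' (im' w))⁻¹ • im' w) := by
        rw [smul_smul, mul_inv_cancel₀ hn, one_smul]
      rw [this, mul'_smul_left, inner'_smul_right,
        hck _ (isImUnit_normalize (re'_im' w) him), mul_zero]
  have hkey := hall (mul' c₀ (conj' ck))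
  rw [key_identity, inner'_smul_right] at hkey
  rcases mul_eq_zero.1 hkey with h' | h'
  · by_contra hne
    exact absurd h' (ne_of_gt (inner'_self_pos hne))
  · exact absurd h' (ne_of_gt (inner'_self_pos hc₀))

theorem pt_real (I : Octo) (x : ℝ) : pt I (x, 0) = emb x := by
  simp [pt]

theorem continuous_pt (I : Octo) : Continuous (pt I) := by
  unfold pt emb
  fun_prop

/-! ### Complex structure on a slice -/

def SliceC (_I : Octo) : Type := Octo

namespace SliceC

variable {I : Octo}

instance : AddCommGroup (SliceC I) := inferInstanceAs (AddCommGroup Octo)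
instance : Module ℝ (SliceC I) := inferInstanceAs (Module ℝ Octo)

def ofOcto : Octo → SliceC I := id
def toOcto : SliceC I → Octo := id

instance [Fact (IsImUnit I)] : SMul ℂ (SliceC I) :=
  ⟨fun z v => ofOcto (z.re • toOcto v + z.im • mul' I (toOcto v))⟩

theorem csmul_def [Fact (IsImUnit I)] (z : ℂ) (v : SliceC I) :
    z • v = ofOcto (z.re • toOcto v + z.im • mul' I (toOcto v)) := rfl

theorem ofOcto_add (x y : Octo) : (ofOcto (x + y) : SliceC I) = ofOcto x + ofOcto y := rfl

instance [Fact (IsImUnit I)] : Module ℂ (SliceC I) where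
  one_smul v := by
    show ofOcto ((1:ℂ).re • toOcto v + (1:ℂ).im • mul' I (toOcto v)) = v
    simp only [Complex.one_re, Complex.one_im, one_smul, zero_smul, add_zero]
    rfl
  mul_smul z w v := by
    have hI : IsImUnit I := Fact.out
    show (((z*w).re • toOcto v + (z*w).im • mul' I (toOcto v)) : Octo)
      = z.re • (w.re • toOcto v + w.im • mul' I (toOcto v))
        + z.im • mul' I (w.re • toOcto v + w.im • mul' I (toOcto v))
    simp only [mul'_add_right, mul'_smul_right, hI.mul'_mul', Complex.mul_re, Complex.mul_im]
    module
  smul_zero z := by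
    show ofOcto (z.re • (0:Octo) + z.im • mul' I (0:Octo)) = ofOcto 0
    rw [mul'_zero_right, smul_zero, smul_zero, add_zero]
  smul_add z v w := by
    show ofOcto (z.re • (toOcto v + toOcto w) + z.im • mul' I (toOcto v + toOcto w))
      = ofOcto ((z.re • toOcto v + z.im • mul' I (toOcto v))
          + (z.re • toOcto w + z.im • mul' I (toOcto w)))
    rw [mul'_add_right, smul_add, smul_add]
    unfold ofOcto
    abel_nf
    rfl
  add_smul z w v := by
    show ofOcto ((z+w).re • toOcto v + (z+w).im • mul' I (toOcto v))
      = ofOcto ((z.re • toOcto v + z.im • mul' I (toOcto v))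
          + (w.re • toOcto v + w.im • mul' I (toOcto v)))
    rw [Complex.add_re, Complex.add_im, add_smul, add_smul]
    unfold ofOcto
    abel_nf
    rfl
  zero_smul v := by
    show ofOcto ((0:ℂ).re • toOcto v + (0:ℂ).im • mul' I (toOcto v)) = ofOcto 0
    simp

theorem real_csmul [Fact (IsImUnit I)] (a : ℝ) (v : SliceC I) :
    (a : ℂ) • v = ofOcto (a • toOcto v) := by
  rw [csmul_def]
  simp

instance [Fact (IsImUnit I)] : IsScalarTower ℝ ℂ (SliceC I) := by
  constructor
  intro a z v
  rw [csmul_def, csmul_def]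
  show ofOcto ((a • z).re • toOcto v + (a • z).im • mul' I (toOcto v))
    = a • ofOcto (z.re • toOcto v + z.im • mul' I (toOcto v))
  have h1 : (a • z).re = a * z.re := by simp [Complex.smul_re]
  have h2 : (a • z).im = a * z.im := by simp [Complex.smul_im]
  rw [h1, h2, mul_smul, mul_smul]
  show _ = ofOcto (a • (z.re • toOcto v + z.im • mul' I (toOcto v)))
  rw [smul_add]

instance : Module.Finite ℝ (SliceC I) := inferInstanceAs (Module.Finite ℝ Octo)

instance [Fact (IsImUnit I)] : Module.Finite ℂ (SliceC I) :=
  Module.Finite.of_restrictScalars_finite ℝ ℂ (SliceC I)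

end SliceC

theorem exists_slice_equiv (I : Octo) (hI : IsImUnit I) :
    ∃ (n : ℕ) (A : Octo →L[ℝ] (Fin n → ℂ)) (B : (Fin n → ℂ) →L[ℝ] Octo),
      (∀ v, B (A v) = v) ∧ (∀ w, A (B w) = w) ∧
      (∀ v, A (mul' I v) = Complex.I • A v) ∧
      (∀ (z : ℂ) (w : Fin n → ℂ), B (z • w) = z.re • B w + z.im • mul' I (B w)) := by
  haveI : Fact (IsImUnit I) := ⟨hI⟩
  set n := Module.finrank ℂ (SliceC I) with hn
  let b : Module.Basis (Fin n) ℂ (SliceC I) := Module.finBasis ℂ (SliceC I)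
  let E : SliceC I ≃ₗ[ℂ] (Fin n → ℂ) := b.equivFun
  have hsmulI : ∀ v : Octo, (SliceC.ofOcto (mul' I v) : SliceC I)
      = Complex.I • SliceC.ofOcto v := by
    intro v
    rw [SliceC.csmul_def]
    simp only [Complex.I_re, Complex.I_im, zero_smul, one_smul, zero_add]
    rfl
  let Alin : Octo →ₗ[ℝ] (Fin n → ℂ) :=
    { toFun := fun v => E (SliceC.ofOcto v)
      map_add' := fun x y => by
        show E (SliceC.ofOcto (x + y)) = E (SliceC.ofOcto x) + E (SliceC.ofOcto y)
        rw [SliceC.ofOcto_add, map_add]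
      map_smul' := fun a v => by
        show E (SliceC.ofOcto (a • v)) = a • E (SliceC.ofOcto v)
        have h1 : (SliceC.ofOcto (a • v) : SliceC I) = (a : ℂ) • SliceC.ofOcto v :=
          (SliceC.real_csmul a _).symm
        rw [h1, map_smul]
        exact Complex.coe_smul _ _ }
  let Blin : (Fin n → ℂ) →ₗ[ℝ] Octo :=
    { toFun := fun w => SliceC.toOcto (E.symm w)
      map_add' := fun x y => by
        show SliceC.toOcto (E.symm (x + y)) = SliceC.toOcto (E.symm x) + SliceC.toOcto (E.symm y)
        rw [map_add]; rfl
      map_smul' := fun a w => by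
        show SliceC.toOcto (E.symm (a • w)) = a • SliceC.toOcto (E.symm w)
        rw [← Complex.coe_smul, map_smul, SliceC.real_csmul]
        rfl }
  refine ⟨n, ⟨Alin, Alin.continuous_of_finiteDimensional⟩,
    ⟨Blin, Blin.continuous_of_finiteDimensional⟩, ?_, ?_, ?_, ?_⟩
  · intro v
    show SliceC.toOcto (E.symm (E (SliceC.ofOcto v))) = v
    rw [E.symm_apply_apply]; rfl
  · intro w
    show E (SliceC.ofOcto (SliceC.toOcto (E.symm w))) = w
    rw [show (SliceC.ofOcto (SliceC.toOcto (E.symm w)) : SliceC I) = E.symm w from rfl,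
      E.apply_symm_apply]
  · intro v
    show E (SliceC.ofOcto (mul' I v)) = Complex.I • E (SliceC.ofOcto v)
    rw [hsmulI, map_smul]
  · intro z w
    show SliceC.toOcto (E.symm (z • w)) = z.re • SliceC.toOcto (E.symm w)
      + z.im • mul' I (SliceC.toOcto (E.symm w))
    rw [map_smul, SliceC.csmul_def]
    rfl

/-! ### Tail estimates for power series -/

theorem geom_tail_bound {a : ℕ → Octo} {C ρ : ℝ} (hρ : 0 < ρ)
    (hC : ∀ n, ‖a n‖ * ρ ^ n ≤ C) (m : ℕ) {t : ℝ} (ht : |t| ≤ ρ / 2)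
    {T : Octo} (hT : HasSum (fun n => t ^ (n + m) • a (n + m)) T) :
    ‖T‖ ≤ 2 * C * (|t| / ρ) ^ m := by
  set q : ℝ := |t| / ρ with hq
  have hq0 : 0 ≤ q := div_nonneg (abs_nonneg _) hρ.le
  have hq2 : q ≤ 1 / 2 := by
    rw [hq, div_le_div_iff₀ hρ (by norm_num)]
    linarith
  have hq1 : q < 1 := lt_of_le_of_lt hq2 (by norm_num)
  have hC0 : 0 ≤ C := le_trans (by positivity) (hC 0)
  have hterm : ∀ n : ℕ, ‖t ^ (n + m) • a (n + m)‖ ≤ C * q ^ m * q ^ n := by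
    intro n
    have h1 : ‖t ^ (n + m) • a (n + m)‖ = |t| ^ (n + m) * ‖a (n + m)‖ := by
      rw [norm_smul, Real.norm_eq_abs, abs_pow]
    have h2 : ‖a (n + m)‖ * ρ ^ (n + m) ≤ C := hC (n + m)
    have h3 : |t| ^ (n + m) = q ^ (n + m) * ρ ^ (n + m) := by
      rw [hq, div_pow, div_mul_cancel₀]
      positivity
    rw [h1, h3]
    calc q ^ (n + m) * ρ ^ (n + m) * ‖a (n + m)‖
        = q ^ (n + m) * (‖a (n + m)‖ * ρ ^ (n + m)) := by ring
      _ ≤ q ^ (n + m) * C := by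
          apply mul_le_mul_of_nonneg_left h2 (by positivity)
      _ = C * q ^ m * q ^ n := by rw [pow_add]; ring
  have hgeom : Summable (fun n : ℕ => C * q ^ m * q ^ n) :=
    (summable_geometric_of_lt_one hq0 hq1).mul_left _
  have hle := hT.tsum_eq
  have hsum : Summable fun n => ‖t ^ (n + m) • a (n + m)‖ :=
    Summable.of_nonneg_of_le (fun n => norm_nonneg _) hterm hgeom
  calc ‖T‖ = ‖∑' n, t ^ (n + m) • a (n + m)‖ := by rw [hle]
    _ ≤ ∑' n, ‖t ^ (n + m) • a (n + m)‖ := norm_tsum_le_tsum_norm hsum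
    _ ≤ ∑' n : ℕ, C * q ^ m * q ^ n := Summable.tsum_le_tsum hterm hsum hgeom
    _ = C * q ^ m * (1 - q)⁻¹ := by
        rw [tsum_mul_left, tsum_geometric_of_lt_one hq0 hq1]
    _ ≤ C * q ^ m * 2 := by
        apply mul_le_mul_of_nonneg_left _ (by positivity)
        rw [inv_le_comm₀ (by linarith) (by norm_num)]
        linarith
    _ = 2 * C * q ^ m := by ring

theorem coeff_unique {a : ℕ → Octo} {C ρ r : ℝ} (hρ : 0 < ρ) (hr : 0 < r)
    (hC : ∀ n, ‖a n‖ * ρ ^ n ≤ C)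
    (h : ∀ t : ℝ, |t| < r → HasSum (fun n => t ^ n • a n) 0) : ∀ n, a n = 0 := by
  intro m
  induction m using Nat.strong_induction_on with
  | _ m ih =>
  have key : ∀ t : ℝ, 0 < t → t < r → t ≤ ρ / 2 → ‖a m‖ ≤ 2 * C * t / ρ ^ (m + 1) := by
    intro t ht0 htr htρ
    have habs : |t| = t := abs_of_pos ht0
    have hs := h t (by rwa [habs])
    have htail : HasSum (fun n => t ^ (n + (m + 1)) • a (n + (m + 1)))
        (0 - ∑ i ∈ Finset.range (m + 1), t ^ i • a i) := by
      exact (hasSum_nat_add_iff' (m + 1)).2 hs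
    have hsum0 : ∑ i ∈ Finset.range (m + 1), t ^ i • a i = t ^ m • a m := by
      rw [Finset.sum_range_succ]
      have : ∀ i ∈ Finset.range m, t ^ i • a i = 0 := by
        intro i hi
        rw [ih i (Finset.mem_range.1 hi), smul_zero]
      rw [Finset.sum_eq_zero this, zero_add]
    rw [hsum0, zero_sub] at htail
    have hb := geom_tail_bound hρ hC (m + 1) (by rwa [habs]) htail
    rw [norm_neg, norm_smul, Real.norm_eq_abs, abs_pow, habs] at hb
    have hpm : 0 < t ^ m := pow_pos ht0 m
    have h2 : ‖a m‖ ≤ 2 * C * (t / ρ) ^ (m + 1) / t ^ m := by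
      rw [le_div_iff₀ hpm]
      linarith [hb]
    calc ‖a m‖ ≤ 2 * C * (t / ρ) ^ (m + 1) / t ^ m := h2
      _ = 2 * C * t / ρ ^ (m + 1) := by
          rw [div_pow, pow_succ]
          field_simp
  by_contra ham
  have hpos : 0 < ‖a m‖ := norm_pos_iff.2 ham
  set K : ℝ := 2 * C / ρ ^ (m + 1) with hK
  have hC0 : 0 ≤ C := le_trans (by positivity) (hC 0)
  have hK0 : 0 ≤ K := by positivity
  set t : ℝ := min (min (r / 2) (ρ / 2)) (‖a m‖ / (2 * (K + 1))) with htdef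
  have ht0 : 0 < t := lt_min (lt_min (by linarith) (by linarith)) (by positivity)
  have h1 : t < r := lt_of_le_of_lt (le_trans (min_le_left _ _) (min_le_left _ _)) (by linarith)
  have h2 : t ≤ ρ / 2 := le_trans (min_le_left _ _) (min_le_right _ _)
  have h3 : t ≤ ‖a m‖ / (2 * (K + 1)) := min_le_right _ _
  have hb := key t ht0 h1 h2
  have hb' : ‖a m‖ ≤ K * t := by
    rw [hK]
    calc ‖a m‖ ≤ 2 * C * t / ρ ^ (m + 1) := hb
      _ = 2 * C / ρ ^ (m + 1) * t := by ring
  have h4 : (K + 1) * (‖a m‖ / (2 * (K + 1))) = ‖a m‖ / 2 := by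
    have : K + 1 ≠ 0 := by linarith
    field_simp
  have h5 : (K + 1) * t ≤ ‖a m‖ / 2 := by
    rw [← h4]
    exact mul_le_mul_of_nonneg_left h3 (by linarith)
  nlinarith


theorem inner'_expand (x y : Octo) :
    inner' (x + y) (x + y) = inner' x x + (2 * inner' x y + inner' y y) := by
  rw [inner'_add_left, inner'_add_right, inner'_add_right, inner'_symm y x]
  ring

theorem mul'_neg_right (x z : Octo) : mul' x (-z) = - mul' x z := by
  have : (-z) = (-1 : ℝ) • z := by simp
  rw [this, mul'_smul_right]; simp

theorem slice_series (Ω : Set Octo) (hΩopen : IsOpen Ω) (f : Octo → Octo)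
    (hf : SliceRegular Ω f) (x₀ : ℝ) (hx₀ : emb x₀ ∈ Ω) (I : Octo) (hI : IsImUnit I)
    (hconn : IsConnected {p : ℝ × ℝ | pt I p ∈ Ω}) :
    ∃ (c : ℕ → Octo) (r ρ C : ℝ), 0 < r ∧ 0 < ρ ∧
      c 0 = f (emb x₀) ∧
      (∀ n, ‖c n‖ * ρ ^ n ≤ C) ∧
      (∀ θ t : ℝ, |t| < r → pt I (x₀ + t * Real.cos θ, t * Real.sin θ) ∈ Ω) ∧
      (∀ θ t : ℝ, |t| < r →
        HasSum (fun k : ℕ => t ^ k • mul' (expI ((k : ℝ) * θ) I) (c k))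
          (f (pt I (x₀ + t * Real.cos θ, t * Real.sin θ)))) ∧
      ((∀ n, 1 ≤ n → c n = 0) → ∀ p : ℝ × ℝ, pt I p ∈ Ω → f (pt I p) = f (emb x₀)) := by
  obtain ⟨n, A, B, hBA, hAB, hAI, hBsmul⟩ := exists_slice_equiv I hI
  set U : Set ℂ := {z : ℂ | pt I (z.re, z.im) ∈ Ω} with hU
  have hcontpt : Continuous fun z : ℂ => pt I (z.re, z.im) :=
    (continuous_pt I).comp (Complex.continuous_re.prodMk Complex.continuous_im)
  have hUopen : IsOpen U := hΩopen.preimage hcontpt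
  have hx₀U : (x₀ : ℂ) ∈ U := by
    show pt I ((x₀ : ℂ).re, (x₀ : ℂ).im) ∈ Ω
    rw [Complex.ofReal_re, Complex.ofReal_im, pt_real]
    exact hx₀
  set 𝒢 : ℂ → (Fin n → ℂ) := fun z => A (f (pt I (z.re, z.im))) with h𝒢
  -- complex differentiability
  have hdiff : DifferentiableOn ℂ 𝒢 U := by
    intro z hz
    obtain ⟨fx, fy, hd, hcr⟩ := hf I hI (z.re, z.im) hz
    have hfy : fy = mul' I fx := by
      have h1 : fx = - mul' I fy := eq_neg_of_add_eq_zero_left hcr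
      rw [h1, mul'_neg_right, hI.mul'_mul', neg_neg]
    set gC : ℂ →L[ℂ] (Fin n → ℂ) :=
      ContinuousLinearMap.smulRight (1 : ℂ →L[ℂ] ℂ) (A fx) with hgC
    have hre : HasFDerivAt (fun z : ℂ => (z.re, z.im))
        (Complex.equivRealProdCLM : ℂ →L[ℝ] ℝ × ℝ) z :=
      (Complex.equivRealProdCLM : ℂ →L[ℝ] ℝ × ℝ).hasFDerivAt
    have hcomp :
        HasFDerivAt (fun w : ℂ => f (pt I (w.re, w.im)))
          (((ContinuousLinearMap.fst ℝ ℝ ℝ).smulRight fx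
            + (ContinuousLinearMap.snd ℝ ℝ ℝ).smulRight fy).comp
            (Complex.equivRealProdCLM : ℂ →L[ℝ] ℝ × ℝ)) z := by have := hd.comp z hre; exact this
    have hcomp2 : HasFDerivAt 𝒢
        (A.comp (((ContinuousLinearMap.fst ℝ ℝ ℝ).smulRight fx
            + (ContinuousLinearMap.snd ℝ ℝ ℝ).smulRight fy).comp
            (Complex.equivRealProdCLM : ℂ →L[ℝ] ℝ × ℝ))) z := A.hasFDerivAt.comp z hcomp
    have hrestrict : gC.restrictScalars ℝ
        = A.comp (((ContinuousLinearMap.fst ℝ ℝ ℝ).smulRight fx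
            + (ContinuousLinearMap.snd ℝ ℝ ℝ).smulRight fy).comp
            (Complex.equivRealProdCLM : ℂ →L[ℝ] ℝ × ℝ)) := by
      apply ContinuousLinearMap.ext
      intro w
      show w • A fx = A (w.re • fx + w.im • fy)
      rw [map_add, hfy]
      have h1 : A (w.re • fx) = w.re • A fx := map_smul A _ _
      have h2 : A (w.im • mul' I fx) = w.im • A (mul' I fx) := map_smul A _ _
      rw [h1, h2, hAI]
      have hw2 : w • A fx = (↑w.re + ↑w.im * Complex.I) • A fx := by
        rw [Complex.re_add_im]
      rw [hw2, add_smul, mul_smul]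
      rw [Complex.coe_smul, Complex.coe_smul]
    have : HasFDerivAt 𝒢 gC z := hasFDerivAt_of_restrictScalars ℝ hcomp2 hrestrict
    exact this.differentiableAt.differentiableWithinAt
  -- power series at x₀
  have hana : AnalyticAt ℂ 𝒢 (x₀ : ℂ) := hdiff.analyticAt (hUopen.mem_nhds hx₀U)
  obtain ⟨ps, hps⟩ := hana
  obtain ⟨r₀, hball⟩ := hps
  have hnhds : U ∩ EMetric.ball (x₀ : ℂ) r₀ ∈ 𝓝 (x₀ : ℂ) := by
    apply Filter.inter_mem (hUopen.mem_nhds hx₀U)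
    exact EMetric.ball_mem_nhds _ hball.r_pos
  obtain ⟨r, hr0, hrsub⟩ := Metric.mem_nhds_iff.1 hnhds
  obtain ⟨q, hq0, hqr⟩ := ENNReal.lt_iff_exists_nnreal_btwn.1 hball.r_pos
  have hqrad : (q : ℝ≥0∞) < ps.radius := lt_of_lt_of_le hqr hball.r_le
  obtain ⟨C₀, hC₀pos, hC₀⟩ := ps.norm_mul_pow_le_of_lt_radius hqrad
  set c : ℕ → Octo := fun k => B (ps.coeff k) with hc
  have hq0' : (0 : ℝ) < (q : ℝ) := by
    have := ENNReal.coe_pos.1 hq0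
    exact_mod_cast this
  have hmemball : ∀ y : ℂ, ‖y‖ < r → ((x₀ : ℂ) + y ∈ U ∧ y ∈ EMetric.ball (0 : ℂ) r₀) := by
    intro y hy
    have h1 : (x₀ : ℂ) + y ∈ Metric.ball (x₀ : ℂ) r := by
      rw [Metric.mem_ball, dist_eq_norm]
      simpa using hy
    have h2 := hrsub h1
    refine ⟨h2.1, ?_⟩
    have h3 := h2.2
    change edist ((x₀ : ℂ) + y) (x₀ : ℂ) < r₀ at h3
    change edist y 0 < r₀
    have h4 : edist ((x₀ : ℂ) + y) (x₀ : ℂ) = edist y 0 := by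
      have := edist_add_left (x₀ : ℂ) y 0
      simpa using this
    rwa [h4] at h3
  have happly0 : ∀ v : Fin 0 → ℂ, (ps 0) v = ps.coeff 0 := by
    intro v
    rw [FormalMultilinearSeries.coeff]
    exact congrArg _ (funext fun x => x.elim0)
  have hcoeff0 : ps.coeff 0 = A (f (emb x₀)) := by
    have h0 := hball.coeff_zero (fun _ => 0)
    have : 𝒢 (x₀ : ℂ) = A (f (emb x₀)) := by
      rw [h𝒢]
      show A (f (pt I ((x₀ : ℂ).re, (x₀ : ℂ).im))) = A (f (emb x₀))
      rw [Complex.ofReal_re, Complex.ofReal_im, pt_real]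
    rw [← this, ← h0]
    exact (happly0 _).symm
  have hyval : ∀ θ t : ℝ, ((t : ℂ) * Complex.exp ((θ : ℂ) * Complex.I)).re = t * Real.cos θ
      ∧ ((t : ℂ) * Complex.exp ((θ : ℂ) * Complex.I)).im = t * Real.sin θ := by
    intro θ t
    constructor
    · rw [Complex.mul_re, Complex.ofReal_re, Complex.ofReal_im, Complex.exp_ofReal_mul_I_re,
        Complex.exp_ofReal_mul_I_im]
      ring
    · rw [Complex.mul_im, Complex.ofReal_re, Complex.ofReal_im, Complex.exp_ofReal_mul_I_re,
        Complex.exp_ofReal_mul_I_im]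
      ring
  have hynorm : ∀ θ t : ℝ, ‖(t : ℂ) * Complex.exp ((θ : ℂ) * Complex.I)‖ = |t| := by
    intro θ t
    rw [norm_mul, Complex.norm_real, Real.norm_eq_abs,
      Complex.norm_exp_ofReal_mul_I, mul_one]
  refine ⟨c, r, (q : ℝ), ‖B‖ * C₀, hr0, hq0', ?_, ?_, ?_, ?_, ?_⟩
  · -- c 0 = f (emb x₀)
    show B (ps.coeff 0) = f (emb x₀)
    rw [hcoeff0, hBA]
  · -- coefficient bound
    intro k
    have h1 : ‖ps.coeff k‖ ≤ ‖ps k‖ := by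
      have h := (ps k).le_opNorm (fun _ => (1 : ℂ))
      simp only [norm_one, Finset.prod_const_one, mul_one] at h
      rw [FormalMultilinearSeries.coeff]
      exact h
    have h2 : ‖c k‖ ≤ ‖B‖ * ‖ps.coeff k‖ := B.le_opNorm _
    calc ‖c k‖ * (q : ℝ) ^ k ≤ (‖B‖ * ‖ps k‖) * (q : ℝ) ^ k := by
          apply mul_le_mul_of_nonneg_right _ (by positivity)
          exact le_trans h2 (mul_le_mul_of_nonneg_left h1 (ContinuousLinearMap.opNorm_nonneg B))
      _ = ‖B‖ * (‖ps k‖ * (q : ℝ) ^ k) := by ring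
      _ ≤ ‖B‖ * C₀ := mul_le_mul_of_nonneg_left (hC₀ k) (ContinuousLinearMap.opNorm_nonneg B)
  · -- membership
    intro θ t ht
    set y : ℂ := (t : ℂ) * Complex.exp ((θ : ℂ) * Complex.I) with hy
    have hmem := (hmemball y (by rw [hy, hynorm]; exact ht)).1
    have : pt I (((x₀ : ℂ) + y).re, ((x₀ : ℂ) + y).im) ∈ Ω := hmem
    rwa [Complex.add_re, Complex.add_im, Complex.ofReal_re, Complex.ofReal_im,
      (hyval θ t).1, (hyval θ t).2, zero_add] at this
  · -- HasSum
    intro θ t ht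
    set y : ℂ := (t : ℂ) * Complex.exp ((θ : ℂ) * Complex.I) with hy
    obtain ⟨hmemU, hmemE⟩ := hmemball y (by rw [hy, hynorm]; exact ht)
    have hsum0 := hball.hasSum hmemE
    have hsum1 := B.hasSum hsum0
    have heqfun : (fun k : ℕ => B (ps k fun _ => y))
        = fun k : ℕ => t ^ k • mul' (expI ((k : ℝ) * θ) I) (c k) := by
      funext k
      rw [ps.apply_eq_pow_smul_coeff]
      have hy_pow : y ^ k = ((t ^ k : ℝ) : ℂ)
          * Complex.exp ((((k : ℝ) * θ : ℝ) : ℂ) * Complex.I) := by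
        rw [hy, mul_pow, ← Complex.exp_nat_mul]
        push_cast
        ring_nf
      rw [hy_pow, hBsmul]
      rw [(hyval ((k : ℝ) * θ) (t ^ k)).1, (hyval ((k : ℝ) * θ) (t ^ k)).2]
      rw [mul'_expI, mul_smul, mul_smul, ← smul_add]
    have hval : B (𝒢 ((x₀ : ℂ) + y))
        = f (pt I (x₀ + t * Real.cos θ, t * Real.sin θ)) := by
      rw [h𝒢]
      show B (A _) = _
      rw [hBA, Complex.add_re, Complex.add_im, Complex.ofReal_re, Complex.ofReal_im,
        (hyval θ t).1, (hyval θ t).2, zero_add]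
    rw [heqfun, hval] at hsum1
    exact hsum1
  · -- constancy
    intro hzero pnt hpt
    have hcoeff : ∀ k, 1 ≤ k → ps.coeff k = 0 := by
      intro k hk
      have h1 : c k = 0 := hzero k hk
      have h2 : ps.coeff k = A (c k) := (hAB _).symm
      rw [h2, h1, map_zero]
    have heventually : ∀ y : ℂ, ‖y‖ < r → 𝒢 ((x₀ : ℂ) + y) = A (f (emb x₀)) := by
      intro y hy
      obtain ⟨hmemU, hmemE⟩ := hmemball y hy
      have hsum0 := hball.hasSum hmemE
      have hsingle : HasSum (fun k => ps k fun _ => y) (ps.coeff 0) := by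
        have hzero' : ∀ k : ℕ, k ≠ 0 → (ps k fun _ => y) = 0 := by
          intro k hk
          rw [ps.apply_eq_pow_smul_coeff, hcoeff k (Nat.one_le_iff_ne_zero.2 hk), smul_zero]
        have h := hasSum_single (f := fun k => ps k fun _ => y) 0 hzero'
        have hred : (fun k : ℕ => ps k fun _ => y) 0 = ps.coeff 0 := happly0 _
        rwa [happly0] at h
      rw [hsum0.unique hsingle, hcoeff0]
    have hanaU : AnalyticOnNhd ℂ 𝒢 U := hdiff.analyticOnNhd hUopen
    have hconstA : AnalyticOnNhd ℂ (fun _ : ℂ => A (f (emb x₀))) U := analyticOnNhd_const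
    have hUconn : IsPreconnected U := by
      have himage : U = (fun p : ℝ × ℝ => (p.1 : ℂ) + (p.2 : ℂ) * Complex.I)
          '' {p : ℝ × ℝ | pt I p ∈ Ω} := by
        ext z
        constructor
        · intro hz
          exact ⟨(z.re, z.im), hz, by simp [Complex.re_add_im]⟩
        · rintro ⟨p, hp, rfl⟩
          show pt I (((p.1 : ℂ) + (p.2 : ℂ) * Complex.I).re,
            ((p.1 : ℂ) + (p.2 : ℂ) * Complex.I).im) ∈ Ω
          simpa using hp
      rw [himage]
      apply IsConnected.isPreconnected
      apply hconn.image
      apply Continuous.continuousOn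
      exact (Complex.continuous_ofReal.comp continuous_fst).add
        ((Complex.continuous_ofReal.comp continuous_snd).mul continuous_const)
    have heq : 𝒢 =ᶠ[𝓝 (x₀ : ℂ)] fun _ => A (f (emb x₀)) := by
      filter_upwards [Metric.ball_mem_nhds (x₀ : ℂ) hr0] with z hz
      have hz2 : z = (x₀ : ℂ) + (z - (x₀ : ℂ)) := by ring
      rw [hz2]
      apply heventually
      rw [Metric.mem_ball, dist_eq_norm] at hz
      exact hz
    have hEqOn := hanaU.eqOn_of_preconnected_of_eventuallyEq hconstA hUconn hx₀U heq
    set z : ℂ := (pnt.1 : ℂ) + (pnt.2 : ℂ) * Complex.I with hz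
    have hzre : z.re = pnt.1 := by simp [hz]
    have hzim : z.im = pnt.2 := by simp [hz]
    have hzU : z ∈ U := by
      show pt I (z.re, z.im) ∈ Ω
      rw [hzre, hzim]
      exact hpt
    have := hEqOn hzU
    rw [h𝒢] at this
    have hBthis := congrArg B this
    rw [hBA, hBA] at hBthis
    rwa [hzre, hzim] at hBthis


end Octo

open Octo in
set_option maxHeartbeats 4000000 in
theorem minimum_principle_real (Ω : Set Octo) (hΩ : SymSliceDomain Ω)
    (f : Octo → Octo) (hf : SliceRegular Ω f)
    (x₀ : ℝ) (hx₀ : emb x₀ ∈ Ω)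
    (hmin : IsLocalMinOn (fun z => norm' (f z)) Ω (emb x₀)) :
    f (emb x₀) = 0 ∨ ∀ z ∈ Ω, ∀ w ∈ Ω, f z = f w := by
  obtain ⟨hopen, hconnΩ, hreal, hsliceconn, hsym⟩ := hΩ
  by_cases hc00 : f (emb x₀) = 0
  · exact Or.inl hc00
  right
  -- axis sums
  have haxis : ∀ (I : Octo), ∀ (c' : ℕ → Octo) (r' : ℝ),
      (∀ θ t : ℝ, |t| < r' →
        HasSum (fun k : ℕ => t ^ k • mul' (expI ((k : ℝ) * θ) I) (c' k))
          (f (pt I (x₀ + t * Real.cos θ, t * Real.sin θ)))) →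
      ∀ t : ℝ, |t| < r' → HasSum (fun k : ℕ => t ^ k • c' k) (f (emb (x₀ + t))) := by
    intro I c' r' hsum t ht
    have h := hsum 0 t ht
    rw [Real.cos_zero, Real.sin_zero, mul_one, mul_zero, pt_real] at h
    have heq : (fun k : ℕ => t ^ k • mul' (expI ((k : ℝ) * 0) I) (c' k))
        = fun k : ℕ => t ^ k • c' k := by
      funext k
      rw [mul_zero, expI_zero, one'_mul']
    rwa [heq] at h
  -- uniqueness of axis coefficients
  have huniq : ∀ (c₁ c₂ : ℕ → Octo) (r₁ ρ₁ C₁ r₂ ρ₂ C₂ : ℝ), 0 < r₁ → 0 < ρ₁ → 0 < r₂ → 0 < ρ₂ →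
      (∀ m, ‖c₁ m‖ * ρ₁ ^ m ≤ C₁) → (∀ m, ‖c₂ m‖ * ρ₂ ^ m ≤ C₂) →
      (∀ t : ℝ, |t| < r₁ → HasSum (fun k : ℕ => t ^ k • c₁ k) (f (emb (x₀ + t)))) →
      (∀ t : ℝ, |t| < r₂ → HasSum (fun k : ℕ => t ^ k • c₂ k) (f (emb (x₀ + t)))) →
      ∀ m, c₁ m = c₂ m := by
    intro c₁ c₂ r₁ ρ₁ C₁ r₂ ρ₂ C₂ hr₁ hρ₁ hr₂ hρ₂ hb₁ hb₂ hs₁ hs₂ m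
    have hρ : (0 : ℝ) < min ρ₁ ρ₂ := lt_min hρ₁ hρ₂
    have hr : (0 : ℝ) < min r₁ r₂ := lt_min hr₁ hr₂
    have hCnn : ∀ m, ‖(c₁ m - c₂ m)‖ * (min ρ₁ ρ₂) ^ m ≤ C₁ + C₂ := by
      intro m
      have h1 : ‖c₁ m‖ * (min ρ₁ ρ₂) ^ m ≤ C₁ := by
        refine le_trans ?_ (hb₁ m)
        apply mul_le_mul_of_nonneg_left _ (norm_nonneg _)
        exact pow_le_pow_left₀ (le_of_lt hρ) (min_le_left _ _) m
      have h2 : ‖c₂ m‖ * (min ρ₁ ρ₂) ^ m ≤ C₂ := by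
        refine le_trans ?_ (hb₂ m)
        apply mul_le_mul_of_nonneg_left _ (norm_nonneg _)
        exact pow_le_pow_left₀ (le_of_lt hρ) (min_le_right _ _) m
      calc ‖c₁ m - c₂ m‖ * (min ρ₁ ρ₂) ^ m
          ≤ (‖c₁ m‖ + ‖c₂ m‖) * (min ρ₁ ρ₂) ^ m :=
            mul_le_mul_of_nonneg_right (norm_sub_le _ _) (by positivity)
        _ = ‖c₁ m‖ * (min ρ₁ ρ₂) ^ m + ‖c₂ m‖ * (min ρ₁ ρ₂) ^ m := by ring
        _ ≤ C₁ + C₂ := add_le_add h1 h2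
    have hzero : ∀ t : ℝ, |t| < min r₁ r₂ →
        HasSum (fun k : ℕ => t ^ k • (c₁ k - c₂ k)) 0 := by
      intro t ht
      have h1 := hs₁ t (lt_of_lt_of_le ht (min_le_left _ _))
      have h2 := hs₂ t (lt_of_lt_of_le ht (min_le_right _ _))
      have h3 := h1.sub h2
      rw [sub_self] at h3
      have heq : (fun k : ℕ => t ^ k • c₁ k - t ^ k • c₂ k)
          = fun k : ℕ => t ^ k • (c₁ k - c₂ k) := by
        funext k
        rw [smul_sub]
      rwa [heq] at h3
    have := coeff_unique hρ hr hCnn hzero m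
    exact sub_eq_zero.1 this
  -- base slice
  obtain ⟨c, r0, ρ0, C0, hr0, hρ0, hc0eq, hbound0, hmem0, hsum0, hconst0⟩ :=
    slice_series Ω hopen f hf x₀ hx₀ _ isImUnit_i0 (hsliceconn _ isImUnit_i0)
  have haxis0 := haxis _ c r0 hsum0
  have hC0nn : 0 ≤ C0 := le_trans (by positivity) (hbound0 0)
  -- local min data
  have hminev : ∀ᶠ z in 𝓝[Ω] (emb x₀), norm' (f (emb x₀)) ≤ norm' (f z) := hmin
  rw [eventually_nhdsWithin_iff] at hminev
  rw [Metric.eventually_nhds_iff] at hminev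
  obtain ⟨ε, hε, hball⟩ := hminev
  -- the key induction
  have hck : ∀ k, 1 ≤ k → c k = 0 := by
    intro k
    induction k using Nat.strong_induction_on with
    | _ k ih =>
    intro hk1
    apply eq_zero_of_inner'_units hc00
    intro I hI α
    set θ : ℝ := α / (k : ℝ) with hθ
    have hkne : ((k : ℝ)) ≠ 0 := by
      have : (0 : ℕ) < k := hk1
      positivity
    have hkθ : (k : ℝ) * θ = α := by
      rw [hθ, mul_div_cancel₀ _ hkne]
    obtain ⟨c', r', ρ', C', hr', hρ', hc'0, hbound', hmem', hsum', _⟩ :=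
      slice_series Ω hopen f hf x₀ hx₀ I hI (hsliceconn I hI)
    have hcc : ∀ m, c' m = c m :=
      huniq c' c r' ρ' C' r0 ρ0 C0 hr' hρ' hr0 hρ0 hbound' hbound0
        (haxis _ c' r' hsum') haxis0
    -- rewrite slice sums in terms of c
    set a : ℕ → Octo := fun m => mul' (expI ((m : ℝ) * θ) I) (c m) with ha
    have hsumc : ∀ t : ℝ, |t| < r' →
        HasSum (fun m : ℕ => t ^ m • a m)
          (f (pt I (x₀ + t * Real.cos θ, t * Real.sin θ))) := by
      intro t ht
      have h := hsum' θ t ht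
      have heq : (fun m : ℕ => t ^ m • mul' (expI ((m : ℝ) * θ) I) (c' m))
          = fun m : ℕ => t ^ m • a m := by
        funext m
        rw [ha, hcc m]
      rwa [heq] at h
    have ha0 : a 0 = c 0 := by
      have h00 : ((0 : ℕ) : ℝ) * θ = 0 := by norm_num
      show mul' (expI (((0 : ℕ) : ℝ) * θ) I) (c 0) = c 0
      rw [h00, expI_zero, one'_mul']
    have hak : a k = mul' (expI α I) (c k) := by
      show mul' (expI (((k : ℕ) : ℝ) * θ) I) (c k) = _
      rw [hkθ]
    have hamid : ∀ m, 1 ≤ m → m < k → a m = 0 := by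
      intro m h1 h2
      show mul' _ (c m) = 0
      rw [ih m h2 h1, mul'_zero_right]
    have hCC0 : (0:ℝ) ≤ 2 * (1 + ‖I‖) * C0 := by
      apply mul_nonneg _ hC0nn
      positivity
    set CC : ℝ := 2 * (1 + ‖I‖) * C0 with hCC
    have habound : ∀ m, ‖a m‖ * ρ0 ^ m ≤ CC := by
      intro m
      have h1 : ‖a m‖ ≤ 2 * (1 + ‖I‖) * ‖c m‖ := by
        calc ‖a m‖ ≤ 2 * ‖expI ((m : ℝ) * θ) I‖ * ‖c m‖ := norm_mul'_le _ _
          _ ≤ 2 * (1 + ‖I‖) * ‖c m‖ := by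
              apply mul_le_mul_of_nonneg_right _ (norm_nonneg _)
              have hh := norm_expI_le ((m : ℝ) * θ) I
              linarith
      calc ‖a m‖ * ρ0 ^ m ≤ (2 * (1 + ‖I‖) * ‖c m‖) * ρ0 ^ m :=
            mul_le_mul_of_nonneg_right h1 (by positivity)
        _ = 2 * (1 + ‖I‖) * (‖c m‖ * ρ0 ^ m) := by ring
        _ ≤ CC := by
            rw [hCC]
            apply mul_le_mul_of_nonneg_left (hbound0 m)
            positivity
    set v : Octo := mul' (expI α I) (c k) with hv
    set X : ℝ := inner' (f (emb x₀)) v with hX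
    show 0 ≤ X
    have hc0f : c 0 = f (emb x₀) := hc0eq
    set D : ℝ := 2 * CC / ρ0 ^ (k + 1) with hD
    have hD0 : 0 ≤ D := by
      rw [hD]
      apply div_nonneg (by linarith) (by positivity)
    have hdist : ∀ t : ℝ, dist (pt I (x₀ + t * Real.cos θ, t * Real.sin θ)) (emb x₀)
        ≤ |t| * (1 + ‖I‖) := by
      intro t
      rw [dist_eq_norm]
      have hsub : pt I (x₀ + t * Real.cos θ, t * Real.sin θ) - emb x₀
          = emb (t * Real.cos θ) + (t * Real.sin θ) • I := by
        rw [pt, emb_add]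
        abel
      rw [hsub]
      have e1 : |t * Real.cos θ| ≤ |t| := by
        rw [abs_mul]
        calc |t| * |Real.cos θ| ≤ |t| * 1 :=
              mul_le_mul_of_nonneg_left (Real.abs_cos_le_one θ) (abs_nonneg t)
          _ = |t| := mul_one _
      have e2 : |t * Real.sin θ| ≤ |t| := by
        rw [abs_mul]
        calc |t| * |Real.sin θ| ≤ |t| * 1 :=
              mul_le_mul_of_nonneg_left (Real.abs_sin_le_one θ) (abs_nonneg t)
          _ = |t| := mul_one _
      calc ‖emb (t * Real.cos θ) + (t * Real.sin θ) • I‖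
          ≤ ‖emb (t * Real.cos θ)‖ + ‖(t * Real.sin θ) • I‖ := norm_add_le _ _
        _ = |t * Real.cos θ| + |t * Real.sin θ| * ‖I‖ := by
            rw [norm_emb, norm_smul, Real.norm_eq_abs]
        _ ≤ |t| + |t| * ‖I‖ := by
            apply add_le_add e1
            exact mul_le_mul_of_nonneg_right e2 (norm_nonneg _)
        _ = |t| * (1 + ‖I‖) := by ring
    set B : ℝ := 4 * ‖f (emb x₀)‖ * D + 2 * (‖v‖ + D) ^ 2 with hB
    have hB0 : 0 ≤ B := by
      rw [hB]
      positivity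
    have hkey : ∀ t : ℝ, 0 < t → t < r' → t * (1 + ‖I‖) < ε → t ≤ ρ0 / 2 → t ≤ 1 →
        0 ≤ 2 * t ^ k * X + B * t ^ (k + 1) := by
      intro t ht htr htε htρ ht1
      have habs : |t| = t := abs_of_pos ht
      have hs := hsumc t (by rwa [habs])
      set Fz : Octo := f (pt I (x₀ + t * Real.cos θ, t * Real.sin θ)) with hFzdef
      have htail := (hasSum_nat_add_iff' (k + 1)).2 hs
      have hsplit : ∑ i ∈ Finset.range (k + 1), t ^ i • a i = c 0 + t ^ k • v := by
        rw [Finset.sum_range_succ]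
        have hz : ∀ i ∈ Finset.range k, i ≠ 0 → t ^ i • a i = 0 := by
          intro i hik hi0
          rw [hamid i (Nat.one_le_iff_ne_zero.2 hi0) (Finset.mem_range.1 hik), smul_zero]
        rw [Finset.sum_eq_single_of_mem 0 (Finset.mem_range.2 (by omega)) hz]
        rw [pow_zero, one_smul, ha0, hak]
      rw [hsplit] at htail
      set T : Octo := Fz - (c 0 + t ^ k • v) with hT
      have hTbound : ‖T‖ ≤ 2 * CC * (|t| / ρ0) ^ (k + 1) := by
        apply geom_tail_bound hρ0 habound (k + 1) (by rwa [habs])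
        rw [hT]
        exact htail
      rw [habs] at hTbound
      have hTb2 : ‖T‖ ≤ D * t ^ (k + 1) := by
        calc ‖T‖ ≤ 2 * CC * (t / ρ0) ^ (k + 1) := hTbound
          _ = D * t ^ (k + 1) := by
              rw [hD, div_pow]
              field_simp
      have hzΩ : pt I (x₀ + t * Real.cos θ, t * Real.sin θ) ∈ Ω := hmem' θ t (by rwa [habs])
      have hmin_t : norm' (f (emb x₀)) ≤ norm' Fz := by
        apply hball _ hzΩ
        calc dist (pt I (x₀ + t * Real.cos θ, t * Real.sin θ)) (emb x₀)
            ≤ |t| * (1 + ‖I‖) := hdist t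
          _ < ε := by rwa [habs]
      have hφ : inner' (f (emb x₀)) (f (emb x₀)) ≤ inner' Fz Fz := inner'_le_of_norm'_le hmin_t
      set u : Octo := t ^ k • v + T with hu
      have hFz : Fz = c 0 + u := by
        rw [hu, hT]
        abel
      have hexp : inner' Fz Fz
          = inner' (c 0) (c 0) + (2 * inner' (c 0) u + inner' u u) := by
        rw [hFz, inner'_expand]
      have h1 : 0 ≤ 2 * inner' (f (emb x₀)) u + inner' u u := by
        rw [hexp, hc0f] at hφ
        linarith
      have h2 : inner' (f (emb x₀)) u = t ^ k * X + inner' (f (emb x₀)) T := by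
        rw [hu, inner'_add_right, inner'_smul_right, hX, hv]
      have h3 : |inner' (f (emb x₀)) T| ≤ 2 * ‖f (emb x₀)‖ * ‖T‖ :=
        abs_inner'_le _ _
      have h4 : inner' u u ≤ 2 * ‖u‖ ^ 2 := by
        calc inner' u u ≤ |inner' u u| := le_abs_self _
          _ ≤ 2 * ‖u‖ * ‖u‖ := abs_inner'_le u u
          _ = 2 * ‖u‖ ^ 2 := by ring
      have h5 : ‖u‖ ≤ t ^ k * ‖v‖ + ‖T‖ := by
        calc ‖u‖ ≤ ‖t ^ k • v‖ + ‖T‖ := norm_add_le _ _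
          _ = t ^ k * ‖v‖ + ‖T‖ := by
              rw [norm_smul, Real.norm_eq_abs, abs_pow, habs]
      have htk1 : t ^ (k + 1) ≤ t ^ k := pow_le_pow_of_le_one ht.le ht1 (Nat.le_succ k)
      have ht2k : t ^ k * t ^ k ≤ t ^ (k + 1) := by
        rw [← pow_add]
        apply pow_le_pow_of_le_one ht.le ht1
        omega
      have hub : ‖u‖ ≤ t ^ k * (‖v‖ + D) := by
        calc ‖u‖ ≤ t ^ k * ‖v‖ + ‖T‖ := h5
          _ ≤ t ^ k * ‖v‖ + D * t ^ (k + 1) := by linarith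
          _ ≤ t ^ k * ‖v‖ + D * t ^ k := by nlinarith
          _ = t ^ k * (‖v‖ + D) := by ring
      have husq : inner' u u ≤ 2 * (‖v‖ + D) ^ 2 * t ^ (k + 1) := by
        have hpk : (0:ℝ) ≤ t ^ k := by positivity
        have hvD : (0:ℝ) ≤ ‖v‖ + D := by positivity
        calc inner' u u ≤ 2 * ‖u‖ ^ 2 := h4
          _ ≤ 2 * (t ^ k * (‖v‖ + D)) ^ 2 := by nlinarith [norm_nonneg u]
          _ = 2 * (‖v‖ + D) ^ 2 * (t ^ k * t ^ k) := by ring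
          _ ≤ 2 * (‖v‖ + D) ^ 2 * t ^ (k + 1) := by nlinarith
      have hcT_up : inner' (f (emb x₀)) T ≤ 2 * ‖f (emb x₀)‖ * (D * t ^ (k + 1)) := by
        have hle := le_abs_self (inner' (f (emb x₀)) T)
        have hnn : (0:ℝ) ≤ 2 * ‖f (emb x₀)‖ := by positivity
        calc inner' (f (emb x₀)) T ≤ |inner' (f (emb x₀)) T| := hle
          _ ≤ 2 * ‖f (emb x₀)‖ * ‖T‖ := h3
          _ ≤ 2 * ‖f (emb x₀)‖ * (D * t ^ (k + 1)) :=
              mul_le_mul_of_nonneg_left hTb2 hnn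
      rw [hB]
      nlinarith [h1, h2, husq, hcT_up]
    by_contra hXneg
    push_neg at hXneg
    have hXpos : 0 < -X := by linarith
    set t : ℝ := min (min (r' / 2) (ε / (2 * (1 + ‖I‖)))) (min (min (ρ0 / 2) 1) (-X / (B + 1)))
      with htdef
    have hIpos : (0:ℝ) < 1 + ‖I‖ := by positivity
    have ht0 : 0 < t := by
      apply lt_min (lt_min (by linarith) (by positivity))
      apply lt_min (lt_min (by linarith) one_pos)
      positivity
    have htr' : t < r' := by
      calc t ≤ r' / 2 := le_trans (min_le_left _ _) (min_le_left _ _)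
        _ < r' := by linarith
    have htε : t * (1 + ‖I‖) < ε := by
      have h1 : t ≤ ε / (2 * (1 + ‖I‖)) := le_trans (min_le_left _ _) (min_le_right _ _)
      have h2 : t * (1 + ‖I‖) ≤ ε / 2 := by
        have h3 : t * (1 + ‖I‖) ≤ (ε / (2 * (1 + ‖I‖))) * (1 + ‖I‖) :=
          mul_le_mul_of_nonneg_right h1 (by positivity)
        have h4 : (ε / (2 * (1 + ‖I‖))) * (1 + ‖I‖) = ε / 2 := by
          field_simp
        linarith
      linarith
    have htρ : t ≤ ρ0 / 2 := le_trans (min_le_right _ _) (le_trans (min_le_left _ _) (min_le_left _ _))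
    have ht1 : t ≤ 1 := le_trans (min_le_right _ _) (le_trans (min_le_left _ _) (min_le_right _ _))
    have htX : (B + 1) * t ≤ -X := by
      have h1 : t ≤ -X / (B + 1) := le_trans (min_le_right _ _) (min_le_right _ _)
      rw [le_div_iff₀ (by linarith : (0:ℝ) < B + 1)] at h1
      linarith [h1]
    have h := hkey t ht0 htr' htε htρ ht1
    have hpk : 0 < t ^ k := pow_pos ht0 k
    have hrw : 2 * t ^ k * X + B * t ^ (k + 1) = t ^ k * (2 * X + B * t) := by
      rw [pow_succ]
      ring
    rw [hrw] at h
    have hneg : 2 * X + B * t < 0 := by nlinarith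
    have hfinal : t ^ k * (2 * X + B * t) < 0 := mul_neg_of_pos_of_neg hpk hneg
    linarith
  -- conclusion: f is constant on Ω
  have hval : ∀ z ∈ Ω, f z = f (emb x₀) := by
    intro z hz
    by_cases him : im' z = 0
    · have hz' : z = emb (re' z) := by
        have h := him
        rw [im'] at h
        exact sub_eq_zero.1 h
      have hmem : pt ((⟨0, 1, 0, 0⟩ : ℍ[ℝ]), (0 : ℍ[ℝ])) ((re' z), 0) ∈ Ω := by
        rw [pt_real, ← hz']
        exact hz
      have := hconst0 hck ((re' z), 0) hmem
      rw [pt_real] at this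
      rw [hz'] at hz ⊢
      exact this
    · set I : Octo := (norm' (im' z))⁻¹ • im' z with hIdef
      have hI : IsImUnit I := isImUnit_normalize (re'_im' z) him
      obtain ⟨c', r', ρ', C', hr', hρ', hc'0, hbound', hmem', hsum', hconst'⟩ :=
        slice_series Ω hopen f hf x₀ hx₀ I hI (hsliceconn I hI)
      have hcc : ∀ m, c' m = c m :=
        huniq c' c r' ρ' C' r0 ρ0 C0 hr' hρ' hr0 hρ0 hbound' hbound0
          (haxis _ c' r' hsum') haxis0
      have hckI : ∀ m, 1 ≤ m → c' m = 0 := by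
        intro m hm
        rw [hcc m]
        exact hck m hm
      have hzpt : pt I ((re' z), norm' (im' z)) = z := by
        rw [pt]
        show emb (re' z) + norm' (im' z) • ((norm' (im' z))⁻¹ • im' z) = z
        rw [smul_smul, mul_inv_cancel₀ (ne_of_gt (norm'_pos him)), one_smul, emb_re'_add_im']
      have hmem2 : pt I ((re' z), norm' (im' z)) ∈ Ω := by
        rw [hzpt]
        exact hz
      have := hconst' hckI ((re' z), norm' (im' z)) hmem2
      rwa [hzpt] at this
  intro z hz w hw
  rw [hval z hz, hval w hw]
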